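/- The TPTL formula x.F F F (x = 0) (i.e., x.F(F(F(x ∈ [0,0])))) is not definable in MTL: there is no MTL formula φ such that for all data words w, w ⊨ φ iff w ⊨ x.F F F (x = 0). -/

import Mathlib

/-- Integers extended with `-∞` (`⊥`) and `+∞` (`⊤`), used as interval endpoints. -/
abbrev ExtEInt := WithBot (WithTop ℤ)

def ExtEInt.ofInt (n : ℤ) : ExtEInt := ((n : WithTop ℤ) : ExtEInt)

/-- An interval of integers, given by two (possibly infinite) endpoints and
openness flags. -/
structure Iv where
  lo : ExtEInt
  hi : ExtEInt
  loOpen : Bool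
  hiOpen : Bool

/-- Membership of an integer in an interval. -/
def Iv.mem (I : Iv) (d : ℤ) : Prop :=
  (if I.loOpen then I.lo < ExtEInt.ofInt d else I.lo ≤ ExtEInt.ofInt d) ∧
  (if I.hiOpen then ExtEInt.ofInt d < I.hi else ExtEInt.ofInt d ≤ I.hi)

/-- The interval `(-∞, +∞)`. -/
def Iv.univ : Iv := ⟨⊥, ⊤, true, true⟩

/-- The singleton interval `[n, n]`. -/
def Iv.pt (n : ℤ) : Iv := ⟨ExtEInt.ofInt n, ExtEInt.ofInt n, false, false⟩

/-- A data word: an infinite sequence of pairs of a set of propositions and a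
natural number data value. -/
abbrev DataWord (P : Type) := ℕ → (Set P) × ℕ

/-- Syntax of MTL: atoms, negation, conjunction, and interval-constrained
strict until. -/
inductive MTL (P : Type) where
  | atom : P → MTL P
  | neg  : MTL P → MTL P
  | and  : MTL P → MTL P → MTL P
  | untl : MTL P → Iv → MTL P → MTL P

/-- Satisfaction of an MTL formula at position `i` of data word `w`. -/
def MTL.sat {P : Type} (w : DataWord P) : ℕ → MTL P → Prop
  | i, .atom p => p ∈ (w i).1
  | i, .neg φ => ¬ MTL.sat w i φ
  | i, .and φ ψ => MTL.sat w i φ ∧ MTL.sat w i ψ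
  | i, .untl φ I ψ => ∃ j, i < j ∧ MTL.sat w j ψ ∧
      I.mem (((w j).2 : ℤ) - ((w i).2 : ℤ)) ∧
      ∀ k, i < k → k < j → MTL.sat w k φ

/-- A data word satisfies an MTL formula if it holds at position `0`. -/
def MTL.models {P : Type} (w : DataWord P) (φ : MTL P) : Prop := MTL.sat w 0 φ

/-- The until rank of an MTL formula. -/
def MTL.urk {P : Type} : MTL P → ℕ
  | .atom _ => 0
  | .neg φ => φ.urk
  | .and φ ψ => max φ.urk ψ.urk
  | .untl φ _ ψ => max φ.urk ψ.urk + 1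

/-- All interval endpoints of until operators in the formula lie in `S`. -/
def MTL.endpointsIn {P : Type} : MTL P → Set ExtEInt → Prop
  | .atom _, _ => True
  | .neg φ, S => φ.endpointsIn S
  | .and φ ψ, S => φ.endpointsIn S ∧ ψ.endpointsIn S
  | .untl φ I ψ, S => I.lo ∈ S ∧ I.hi ∈ S ∧ φ.endpointsIn S ∧ ψ.endpointsIn S

/-- Syntax of TPTL: atoms, register constraints, negation, conjunction,
strict until, and the freeze quantifier. -/
inductive TPTL (P V : Type) where
  | atom : P → TPTL P V
  | cstr : V → Iv → TPTL P V
  | neg : TPTL P V → TPTL P V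
  | and : TPTL P V → TPTL P V → TPTL P V
  | untl : TPTL P V → TPTL P V → TPTL P V
  | freeze : V → TPTL P V → TPTL P V

/-- Satisfaction of a TPTL formula at position `i` of data word `w` under the
register valuation `ν`. -/
def TPTL.sat {P V : Type} [DecidableEq V] (w : DataWord P) :
    ℕ → (V → ℕ) → TPTL P V → Prop
  | i, _, .atom p => p ∈ (w i).1
  | i, ν, .cstr x I => I.mem (((w i).2 : ℤ) - (ν x : ℤ))
  | i, ν, .neg φ => ¬ TPTL.sat w i ν φ
  | i, ν, .and φ ψ => TPTL.sat w i ν φ ∧ TPTL.sat w i ν ψ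
  | i, ν, .untl φ ψ => ∃ j, i < j ∧ TPTL.sat w j ν ψ ∧
      ∀ k, i < k → k < j → TPTL.sat w k ν φ
  | i, ν, .freeze x φ => TPTL.sat w i (Function.update ν x (w i).2) φ

/-- A data word satisfies a TPTL formula if it holds at position `0` under the
valuation mapping every register to the first data value. -/
def TPTL.models {P V : Type} [DecidableEq V] (w : DataWord P) (φ : TPTL P V) : Prop :=
  TPTL.sat w 0 (fun _ => (w 0).2) φ

/-- The until rank of a TPTL formula. -/
def TPTL.urk {P V : Type} : TPTL P V → ℕ
  | .atom _ => 0
  | .cstr _ _ => 0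
  | .neg φ => φ.urk
  | .and φ ψ => max φ.urk ψ.urk
  | .untl φ ψ => max φ.urk ψ.urk + 1
  | .freeze _ φ => φ.urk

/-- All register constraints in the formula are equality tests `x ∈ [0,0]`. -/
def TPTL.eqOnly {P V : Type} : TPTL P V → Prop
  | .atom _ => True
  | .cstr _ I => I = Iv.pt 0
  | .neg φ => φ.eqOnly
  | .and φ ψ => φ.eqOnly ∧ ψ.eqOnly
  | .untl φ ψ => φ.eqOnly ∧ ψ.eqOnly
  | .freeze _ φ => φ.eqOnly

/-- All endpoints of intervals in register constraints lie in `S`. -/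
def TPTL.cstrIn {P V : Type} : TPTL P V → Set ExtEInt → Prop
  | .atom _, _ => True
  | .cstr _ I, S => I.lo ∈ S ∧ I.hi ∈ S
  | .neg φ, S => φ.cstrIn S
  | .and φ ψ, S => φ.cstrIn S ∧ ψ.cstrIn S
  | .untl φ ψ, S => φ.cstrIn S ∧ ψ.cstrIn S
  | .freeze _ φ, S => φ.cstrIn S

/-- A TPTL truth constant: `x ∈ (-∞, +∞)`. -/
def ttu {P : Type} : TPTL P Unit := .cstr () Iv.univ

/-- The eventually operator `F φ := true U φ` (strict). -/
def Fu {P : Type} (φ : TPTL P Unit) : TPTL P Unit := .untl ttu φ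

/-- The formula `x.F F F (x = 0)`. -/
def xFFF {P : Type} : TPTL P Unit :=
  .freeze () (Fu (Fu (Fu (.cstr () (Iv.pt 0)))))

namespace XFFFProof

variable {P : Type}

/-! ### Bounded endpoints -/

def smallE (M : ℕ) (e : ExtEInt) : Prop :=
  e = ⊥ ∨ e = ((⊤ : WithTop ℤ) : ExtEInt) ∨ ∃ n : ℤ, e = ExtEInt.ofInt n ∧ |n| < (M : ℤ)

def csmall (M : ℕ) : MTL P → Prop
  | .atom _ => True
  | .neg φ => csmall M φ
  | .and φ ψ => csmall M φ ∧ csmall M ψ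
  | .untl φ I ψ => smallE M I.lo ∧ smallE M I.hi ∧ csmall M φ ∧ csmall M ψ

lemma smallE_mono {M M' : ℕ} (h : M ≤ M') {e : ExtEInt} : smallE M e → smallE M' e := by
  rintro (h1 | h1 | ⟨n, rfl, hn⟩)
  · exact Or.inl h1
  · exact Or.inr (Or.inl h1)
  · exact Or.inr (Or.inr ⟨n, rfl, lt_of_lt_of_le hn (by exact_mod_cast h)⟩)

lemma csmall_mono {M M' : ℕ} (h : M ≤ M') : ∀ {φ : MTL P}, csmall M φ → csmall M' φ := by
  intro φ
  induction φ with
  | atom p => intro _; trivial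
  | neg φ ih => exact ih
  | and φ ψ ihφ ihψ => exact fun hh => ⟨ihφ hh.1, ihψ hh.2⟩
  | untl φ I ψ ihφ ihψ =>
    exact fun hh => ⟨smallE_mono h hh.1, smallE_mono h hh.2.1, ihφ hh.2.2.1, ihψ hh.2.2.2⟩

lemma smallE_exists (e : ExtEInt) : ∃ M : ℕ, smallE M e := by
  induction e using WithBot.recBotCoe with
  | bot => exact ⟨1, Or.inl rfl⟩
  | coe t =>
    induction t using WithTop.recTopCoe with
    | top => exact ⟨1, Or.inr (Or.inl rfl)⟩
    | coe n =>
      exact ⟨n.natAbs + 1, Or.inr (Or.inr ⟨n, rfl, by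
        rw [Int.abs_eq_natAbs]; exact_mod_cast Nat.lt_succ_self _⟩)⟩

lemma exists_csmall (φ : MTL P) : ∃ M : ℕ, 1 ≤ M ∧ csmall M φ := by
  induction φ with
  | atom p => exact ⟨1, le_refl 1, trivial⟩
  | neg φ ih => exact ih
  | and φ ψ ihφ ihψ =>
    obtain ⟨M1, hM1, h1⟩ := ihφ
    obtain ⟨M2, _, h2⟩ := ihψ
    exact ⟨max M1 M2, le_trans hM1 (le_max_left _ _),
      csmall_mono (le_max_left _ _) h1, csmall_mono (le_max_right _ _) h2⟩
  | untl φ I ψ ihφ ihψ =>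
    obtain ⟨M1, hM1, h1⟩ := ihφ
    obtain ⟨M2, _, h2⟩ := ihψ
    obtain ⟨Ml, hl⟩ := smallE_exists I.lo
    obtain ⟨Mh, hh⟩ := smallE_exists I.hi
    refine ⟨max (max M1 M2) (max Ml Mh),
      le_trans hM1 (le_trans (le_max_left _ _) (le_max_left _ _)),
      smallE_mono (le_trans (le_max_left _ _) (le_max_right _ _)) hl,
      smallE_mono (le_trans (le_max_right _ _) (le_max_right _ _)) hh,
      csmall_mono (le_trans (le_max_left _ _) (le_max_left _ _)) h1,
      csmall_mono (le_trans (le_max_right _ _) (le_max_left _ _)) h2⟩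

/-! ### Interval membership only depends on the "class" of a difference -/

def clsEq (M x y : ℤ) : Prop := x = y ∨ (M ≤ x ∧ M ≤ y) ∨ (x ≤ -M ∧ y ≤ -M)

lemma le_ofInt_congr {M : ℕ} {e : ExtEInt} (he : smallE M e) {x y : ℤ}
    (h : clsEq (M : ℤ) x y) :
    (e ≤ ExtEInt.ofInt x ↔ e ≤ ExtEInt.ofInt y) ∧ (e < ExtEInt.ofInt x ↔ e < ExtEInt.ofInt y) := by
  rcases he with rfl | rfl | ⟨n, rfl, hn⟩
  · simp [ExtEInt.ofInt]
  · simp [ExtEInt.ofInt]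
  · rw [abs_lt] at hn
    rcases h with rfl | ⟨h1, h2⟩ | ⟨h1, h2⟩
    · exact ⟨Iff.rfl, Iff.rfl⟩
    · constructor <;> simp [ExtEInt.ofInt] <;> omega
    · constructor <;> simp [ExtEInt.ofInt] <;> omega

lemma ofInt_le_congr {M : ℕ} {e : ExtEInt} (he : smallE M e) {x y : ℤ}
    (h : clsEq (M : ℤ) x y) :
    (ExtEInt.ofInt x ≤ e ↔ ExtEInt.ofInt y ≤ e) ∧ (ExtEInt.ofInt x < e ↔ ExtEInt.ofInt y < e) := by
  rcases he with rfl | rfl | ⟨n, rfl, hn⟩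
  · simp [ExtEInt.ofInt]
  · have t : ∀ z : ℤ, ExtEInt.ofInt z < ((⊤ : WithTop ℤ) : ExtEInt) :=
      fun z => WithBot.coe_lt_coe.mpr (WithTop.coe_lt_top z)
    have t' : ∀ z : ℤ, ExtEInt.ofInt z ≤ ((⊤ : WithTop ℤ) : ExtEInt) := fun z => le_of_lt (t z)
    exact ⟨iff_of_true (t' x) (t' y), iff_of_true (t x) (t y)⟩
  · rw [abs_lt] at hn
    rcases h with rfl | ⟨h1, h2⟩ | ⟨h1, h2⟩
    · exact ⟨Iff.rfl, Iff.rfl⟩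
    · constructor <;> simp [ExtEInt.ofInt] <;> omega
    · constructor <;> simp [ExtEInt.ofInt] <;> omega

lemma mem_congr {M : ℕ} {I : Iv} (hlo : smallE M I.lo) (hhi : smallE M I.hi)
    {x y : ℤ} (h : clsEq (M : ℤ) x y) : I.mem x ↔ I.mem y := by
  obtain ⟨h1, h2⟩ := le_ofInt_congr hlo h
  obtain ⟨h3, h4⟩ := ofInt_le_congr hhi h
  unfold Iv.mem
  cases I.loOpen <;> cases I.hiOpen <;> simp only [if_true, if_false, Bool.false_eq_true] <;>
    exact and_congr (by assumption) (by assumption)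

/-! ### The two data words -/

def vA : ℕ → ℕ
  | 0 => 3
  | (n+1) => n+1

def vB : ℕ → ℕ
  | 0 => 3
  | 1 => 1
  | (n+2) => n+3

lemma vA_eq {j : ℕ} (h : 1 ≤ j) : vA j = j := by
  match j, h with
  | (n+1), _ => rfl

lemma vB_eq {j : ℕ} (h : 2 ≤ j) : vB j = j + 1 := by
  match j, h with
  | (n+2), _ => rfl

lemma vA0 : vA 0 = 3 := rfl
lemma vA1 : vA 1 = 1 := rfl
lemma vA2 : vA 2 = 2 := rfl
lemma vA3 : vA 3 = 3 := rfl
lemma vB0 : vB 0 = 3 := rfl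
lemma vB1 : vB 1 = 1 := rfl
lemma vB2 : vB 2 = 3 := rfl

def wA (M : ℕ) : DataWord P := fun i => (∅, vA i * M)
def wB (M : ℕ) : DataWord P := fun i => (∅, vB i * M)

/-! ### The bisimulation relation -/

def Bis (i i' : ℕ) : Prop :=
  (i = 0 ∧ i' = 0) ∨ (i = 1 ∧ i' = 1) ∨ (i = 2 ∧ i' = 1) ∨ (i = 2 ∧ i' = 2) ∨
  (3 ≤ i ∧ (i' = i ∨ i' + 1 = i))

lemma clsEq_of_v (M : ℕ) {a b c d : ℕ}
    (h : ((a:ℤ) - b = (c:ℤ) - d) ∨ (1 ≤ (a:ℤ) - b ∧ 1 ≤ (c:ℤ) - d) ∨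
      ((a:ℤ) - b ≤ -1 ∧ (c:ℤ) - d ≤ -1)) :
    clsEq (M:ℤ) (((a*M : ℕ):ℤ) - ((b*M : ℕ):ℤ)) (((c*M:ℕ):ℤ) - ((d*M:ℕ):ℤ)) := by
  have hM : (0:ℤ) ≤ (M:ℤ) := Int.natCast_nonneg M
  have e1 : ((a*M:ℕ):ℤ) - ((b*M:ℕ):ℤ) = ((a:ℤ)-b) * M := by push_cast; ring
  have e2 : ((c*M:ℕ):ℤ) - ((d*M:ℕ):ℤ) = ((c:ℤ)-d) * M := by push_cast; ring
  unfold clsEq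
  rcases h with h | ⟨h1, h2⟩ | ⟨h1, h2⟩
  · left; rw [e1, e2, h]
  · right; left
    exact ⟨by rw [e1]; nlinarith, by rw [e2]; nlinarith⟩
  · right; right
    exact ⟨by rw [e1]; nlinarith, by rw [e2]; nlinarith⟩

lemma W_AB (M : ℕ) {i i' : ℕ} (hr : Bis i i') :
    ∀ j, i < j → ∃ j', i' < j' ∧ Bis j j' ∧
      clsEq (M:ℤ) (((vA j * M : ℕ) : ℤ) - ((vA i * M : ℕ) : ℤ))
        (((vB j' * M : ℕ) : ℤ) - ((vB i' * M : ℕ) : ℤ)) ∧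
      ∀ k', i' < k' → k' < j' → ∃ k, i < k ∧ k < j ∧ Bis k k' := by
  intro j hj
  rcases hr with ⟨rfl, rfl⟩ | ⟨rfl, rfl⟩ | ⟨rfl, rfl⟩ | ⟨rfl, rfl⟩ | ⟨hi3, hii | hii⟩
  · -- (0,0)
    by_cases h4 : 4 ≤ j
    · refine ⟨j, by omega, by unfold Bis; omega, ?_, ?_⟩
      · exact clsEq_of_v M (Or.inr (Or.inl (by
          rw [vA_eq (by omega), vB_eq (by omega), vA0, vB0]; omega)))
      · intro k' hk1 hk2
        exact ⟨k', hk1, by omega, by unfold Bis; omega⟩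
    · interval_cases j
      · exact ⟨1, by omega, by unfold Bis; omega,
          clsEq_of_v M (Or.inl (by rw [vA1, vA0, vB1, vB0])),
          fun k' h1 h2 => by omega⟩
      · exact ⟨1, by omega, by unfold Bis; omega,
          clsEq_of_v M (Or.inr (Or.inr (by rw [vA2, vA0, vB1, vB0]; omega))),
          fun k' h1 h2 => by omega⟩
      · exact ⟨2, by omega, by unfold Bis; omega,
          clsEq_of_v M (Or.inl (by rw [vA3, vA0, vB2, vB0])),
          fun k' h1 h2 => ⟨1, by omega, by omega, by unfold Bis; omega⟩⟩
  · -- (1,1)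
    by_cases h3 : 3 ≤ j
    · refine ⟨j, by omega, by unfold Bis; omega, ?_, ?_⟩
      · exact clsEq_of_v M (Or.inr (Or.inl (by
          rw [vA_eq (by omega), vB_eq (by omega), vA1, vB1]; omega)))
      · intro k' hk1 hk2
        exact ⟨k', hk1, by omega, by unfold Bis; omega⟩
    · interval_cases j
      · exact ⟨2, by omega, by unfold Bis; omega,
          clsEq_of_v M (Or.inr (Or.inl (by rw [vA2, vA1, vB2, vB1]; omega))),
          fun k' h1 h2 => by omega⟩
  · -- (2,1)
    refine ⟨j - 1, by omega, by unfold Bis; omega, ?_, ?_⟩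
    · exact clsEq_of_v M (Or.inr (Or.inl (by
        rw [vA_eq (by omega), vB_eq (by omega : 2 ≤ j - 1), vA2, vB1]; omega)))
    · intro k' hk1 hk2
      exact ⟨k' + 1, by omega, by omega, by unfold Bis; omega⟩
  · -- (2,2)
    refine ⟨j, by omega, by unfold Bis; omega, ?_, ?_⟩
    · exact clsEq_of_v M (Or.inl (by
        rw [vA_eq (by omega), vB_eq (by omega), vA2, vB2]; omega))
    · intro k' hk1 hk2
      exact ⟨k', hk1, hk2, by unfold Bis; omega⟩
  · -- (i, i) with 3 ≤ i
    refine ⟨j, by omega, by unfold Bis; omega, ?_, ?_⟩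
    · exact clsEq_of_v M (Or.inl (by
        rw [vA_eq (by omega : 1 ≤ j), vB_eq (by omega : 2 ≤ j),
          vA_eq (by omega : 1 ≤ i), vB_eq (by omega : 2 ≤ i')]; omega))
    · intro k' hk1 hk2
      exact ⟨k', by omega, by omega, by unfold Bis; omega⟩
  · -- (i, i-1) with 3 ≤ i, i' + 1 = i
    refine ⟨j - 1, by omega, by unfold Bis; omega, ?_, ?_⟩
    · exact clsEq_of_v M (Or.inl (by
        rw [vA_eq (by omega : 1 ≤ j), vB_eq (by omega : 2 ≤ j - 1),
          vA_eq (by omega : 1 ≤ i), vB_eq (by omega : 2 ≤ i')]; omega))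
    · intro k' hk1 hk2
      exact ⟨k' + 1, by omega, by omega, by unfold Bis; omega⟩

lemma W_BA (M : ℕ) {i i' : ℕ} (hr : Bis i i') :
    ∀ j', i' < j' → ∃ j, i < j ∧ Bis j j' ∧
      clsEq (M:ℤ) (((vB j' * M : ℕ) : ℤ) - ((vB i' * M : ℕ) : ℤ))
        (((vA j * M : ℕ) : ℤ) - ((vA i * M : ℕ) : ℤ)) ∧
      ∀ k, i < k → k < j → ∃ k', i' < k' ∧ k' < j' ∧ Bis k k' := by
  intro j' hj'
  rcases hr with ⟨rfl, rfl⟩ | ⟨rfl, rfl⟩ | ⟨rfl, rfl⟩ | ⟨rfl, rfl⟩ | ⟨hi3, hii | hii⟩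
  · -- (0,0)
    by_cases h3 : 3 ≤ j'
    · refine ⟨j' + 1, by omega, by unfold Bis; omega, ?_, ?_⟩
      · exact clsEq_of_v M (Or.inl (by
          rw [vB_eq (by omega), vA_eq (by omega), vB0, vA0]))
      · intro k hk1 hk2
        by_cases hk : k ≤ 2
        · exact ⟨1, by omega, by omega, by unfold Bis; omega⟩
        · exact ⟨k - 1, by omega, by omega, by unfold Bis; omega⟩
    · interval_cases j'
      · exact ⟨1, by omega, by unfold Bis; omega,
          clsEq_of_v M (Or.inl (by rw [vA1, vA0, vB1, vB0])),
          fun k h1 h2 => by omega⟩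
      · exact ⟨3, by omega, by unfold Bis; omega,
          clsEq_of_v M (Or.inl (by rw [vA3, vA0, vB2, vB0])),
          fun k h1 h2 => ⟨1, by omega, by omega, by unfold Bis; omega⟩⟩
  · -- (1,1)
    by_cases h3 : 3 ≤ j'
    · refine ⟨j', by omega, by unfold Bis; omega, ?_, ?_⟩
      · exact clsEq_of_v M (Or.inr (Or.inl (by
          rw [vB_eq (by omega), vA_eq (by omega), vA1, vB1]; omega)))
      · intro k hk1 hk2
        exact ⟨k, hk1, by omega, by unfold Bis; omega⟩
    · interval_cases j'
      · exact ⟨2, by omega, by unfold Bis; omega,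
          clsEq_of_v M (Or.inr (Or.inl (by rw [vA2, vA1, vB2, vB1]; omega))),
          fun k h1 h2 => by omega⟩
  · -- (2,1)
    refine ⟨j' + 1, by omega, by unfold Bis; omega, ?_, ?_⟩
    · exact clsEq_of_v M (Or.inr (Or.inl (by
        rw [vB_eq (by omega : 2 ≤ j'), vA_eq (by omega : 1 ≤ j' + 1), vA2, vB1]; omega)))
    · intro k hk1 hk2
      exact ⟨k - 1, by omega, by omega, by unfold Bis; omega⟩
  · -- (2,2)
    refine ⟨j', by omega, by unfold Bis; omega, ?_, ?_⟩
    · exact clsEq_of_v M (Or.inl (by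
        rw [vA_eq (by omega), vB_eq (by omega), vA2, vB2]; omega))
    · intro k hk1 hk2
      exact ⟨k, hk1, hk2, by unfold Bis; omega⟩
  · -- (i, i)
    refine ⟨j', by omega, by unfold Bis; omega, ?_, ?_⟩
    · exact clsEq_of_v M (Or.inl (by
        rw [vA_eq (by omega : 1 ≤ j'), vB_eq (by omega : 2 ≤ j'),
          vA_eq (by omega : 1 ≤ i), vB_eq (by omega : 2 ≤ i')]; omega))
    · intro k hk1 hk2
      exact ⟨k, by omega, by omega, by unfold Bis; omega⟩
  · -- (i, i-1)
    refine ⟨j' + 1, by omega, by unfold Bis; omega, ?_, ?_⟩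
    · exact clsEq_of_v M (Or.inl (by
        rw [vA_eq (by omega : 1 ≤ j' + 1), vB_eq (by omega : 2 ≤ j'),
          vA_eq (by omega : 1 ≤ i), vB_eq (by omega : 2 ≤ i')]; omega))
    · intro k hk1 hk2
      exact ⟨k - 1, by omega, by omega, by unfold Bis; omega⟩

/-! ### Transfer lemma for until -/

lemma untl_dir {u v : DataWord P} {R : ℕ → ℕ → Prop} {M : ℕ} {φ ψ : MTL P} {I : Iv}
    (hlo : smallE M I.lo) (hhi : smallE M I.hi)
    (IHφ : ∀ k k', R k k' → MTL.sat u k φ → MTL.sat v k' φ)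
    (IHψ : ∀ k k', R k k' → MTL.sat u k ψ → MTL.sat v k' ψ)
    {i i' : ℕ}
    (W : ∀ j, i < j → ∃ j', i' < j' ∧ R j j' ∧
      clsEq (M:ℤ) (((u j).2 : ℤ) - ((u i).2 : ℤ)) (((v j').2 : ℤ) - ((v i').2 : ℤ)) ∧
      ∀ k', i' < k' → k' < j' → ∃ k, i < k ∧ k < j ∧ R k k')
    (h : MTL.sat u i (.untl φ I ψ)) : MTL.sat v i' (.untl φ I ψ) := by
  obtain ⟨j, hij, hψj, hmem, hbet⟩ := h
  obtain ⟨j', h1, h2, h3, h4⟩ := W j hij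
  refine ⟨j', h1, IHψ _ _ h2 hψj, (mem_congr hlo hhi h3).mp hmem, ?_⟩
  intro k' hk1 hk2
  obtain ⟨k, hk3, hk4, hk5⟩ := h4 k' hk1 hk2
  exact IHφ _ _ hk5 (hbet k hk3 hk4)

/-! ### Key equivalence -/

lemma key (M : ℕ) : ∀ φ : MTL P, csmall M φ → ∀ i i', Bis i i' →
    (MTL.sat (wA (P:=P) M) i φ ↔ MTL.sat (wB (P:=P) M) i' φ) := by
  intro φ
  induction φ with
  | atom p => intro _ i i' _; simp [MTL.sat, wA, wB]
  | neg φ ih =>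
    intro h i i' hr
    have h' : csmall M φ := h
    simp only [MTL.sat]
    exact not_congr (ih h' i i' hr)
  | and φ ψ ihφ ihψ =>
    intro h i i' hr
    obtain ⟨h1, h2⟩ := (h : csmall M φ ∧ csmall M ψ)
    simp only [MTL.sat]
    exact and_congr (ihφ h1 i i' hr) (ihψ h2 i i' hr)
  | untl φ I ψ ihφ ihψ =>
    intro h i i' hr
    obtain ⟨hlo, hhi, hφ, hψ⟩ :=
      (h : smallE M I.lo ∧ smallE M I.hi ∧ csmall M φ ∧ csmall M ψ)
    constructor
    · exact untl_dir hlo hhi (fun k k' hk => (ihφ hφ k k' hk).mp)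
        (fun k k' hk => (ihψ hψ k k' hk).mp) (W_AB M hr)
    · exact untl_dir hlo hhi (fun k k' hk => (ihφ hφ k' k hk).mpr)
        (fun k k' hk => (ihψ hψ k' k hk).mpr) (W_BA M hr)

/-! ### Evaluating xFFF on the two words -/

lemma pt_mem_iff (n z : ℤ) : (Iv.pt n).mem z ↔ z = n := by
  unfold Iv.pt Iv.mem
  simp [ExtEInt.ofInt]
  omega

lemma univ_mem (z : ℤ) : Iv.univ.mem z := by
  unfold Iv.univ Iv.mem
  exact ⟨WithBot.bot_lt_coe _, WithBot.coe_lt_coe.mpr (WithTop.coe_lt_top z)⟩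

lemma modelsA (M : ℕ) : TPTL.models (wA (P:=P) M) xFFF := by
  unfold TPTL.models xFFF Fu ttu
  simp only [TPTL.sat]
  refine ⟨1, by omega, ⟨2, by omega, ⟨3, by omega, ?_, ?_⟩, ?_⟩, ?_⟩
  · rw [pt_mem_iff]
    simp [wA, Function.update, vA0, vA3]
  · intro k _ _; exact univ_mem _
  · intro k _ _; exact univ_mem _
  · intro k _ _; exact univ_mem _

lemma not_modelsB (M : ℕ) (hM : 1 ≤ M) : ¬ TPTL.models (wB (P:=P) M) xFFF := by
  unfold TPTL.models xFFF Fu ttu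
  simp only [TPTL.sat]
  rintro ⟨j1, h1, ⟨j2, h2, ⟨j3, h3, hc, -⟩, -⟩, -⟩
  rw [pt_mem_iff] at hc
  simp only [wB, Function.update] at hc
  rw [vB_eq (by omega : 2 ≤ j3), vB0] at hc
  have hc' : ((j3 : ℤ) - 2) * M = 0 := by push_cast at hc ⊢; linarith
  rcases mul_eq_zero.mp hc' with h | h
  · omega
  · simp at h; omega

end XFFFProof

/-- The TPTL formula `x.F F F (x = 0)` is not definable in MTL. -/
theorem xFFF_not_mtl_definable {P : Type} :
    ¬ ∃ φ : MTL P, ∀ w : DataWord P, MTL.models w φ ↔ TPTL.models w xFFF := by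
  rintro ⟨φ, hφ⟩
  obtain ⟨M, hM, hcs⟩ := XFFFProof.exists_csmall φ
  have hA : MTL.models (XFFFProof.wA (P:=P) M) φ :=
    (hφ _).mpr (XFFFProof.modelsA M)
  have hB : MTL.models (XFFFProof.wB (P:=P) M) φ :=
    (XFFFProof.key M φ hcs 0 0 (Or.inl ⟨rfl, rfl⟩)).mp hA
  exact XFFFProof.not_modelsB M hM ((hφ _).mp hB)
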